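/- Let N be an odd positive integer and S a 2×2 matrix over ZMod N with determinant 1. Then there exists a unitary operator μ(S) on ℂ^N such that μ(S)·A(a)·μ(S)† = A(S·a) for all a ∈ (ZMod N)². -/

import Mathlib

open Matrix BigOperators

noncomputable section

/-- `ω = exp(2πi/N)`, a primitive `N`-th root of unity. -/
def omegaN (N : ℕ) : ℂ := Complex.exp (2 * Real.pi * Complex.I / N)

/-- The shift operator `x(q)|k⟩ = |k+q⟩`. -/
def shiftOp (N : ℕ) [NeZero N] (q : ZMod N) : Matrix (ZMod N) (ZMod N) ℂ :=
  Matrix.of fun k l => if k = l + q then 1 else 0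

/-- The boost operator `z(p)|k⟩ = ω^{pk}|k⟩`. -/
def boostOp (N : ℕ) [NeZero N] (p : ZMod N) : Matrix (ZMod N) (ZMod N) ℂ :=
  Matrix.diagonal fun k => omegaN N ^ (p * k).val

/-- The Weyl operator `w(p,q) = ω^{−2⁻¹pq} z(p) x(q)`. -/
def weylOp (N : ℕ) [NeZero N] (p q : ZMod N) : Matrix (ZMod N) (ZMod N) ℂ :=
  omegaN N ^ ((-(2⁻¹ : ZMod N) * p * q).val) • (boostOp N p * shiftOp N q)

/-- The parity operator `A(0,0)|x⟩ = |−x⟩`. -/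
def parityOp (N : ℕ) [NeZero N] : Matrix (ZMod N) (ZMod N) ℂ :=
  Matrix.of fun k l => if k = -l then 1 else 0

/-- The phase space operators `A(p,q) = w(p,q) A(0,0) w(p,q)†`. -/
def phaseOp (N : ℕ) [NeZero N] (a : ZMod N × ZMod N) : Matrix (ZMod N) (ZMod N) ℂ :=
  weylOp N a.1 a.2 * parityOp N * (weylOp N a.1 a.2)ᴴ

/-- The discrete Wigner function `W_X(v) = (1/N)·tr(A(v)·X)`. -/
def wigner (N : ℕ) [NeZero N] (X : Matrix (ZMod N) (ZMod N) ℂ) (v : ZMod N × ZMod N) : ℂ :=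
  (1 / (N : ℂ)) * (phaseOp N v * X).trace

/-- The action of a 2×2 matrix over `ZMod N` on `(ZMod N)²` as a column vector. -/
def matAct (N : ℕ) (S : Matrix (Fin 2) (Fin 2) (ZMod N)) (a : ZMod N × ZMod N) :
    ZMod N × ZMod N :=
  (S 0 0 * a.1 + S 0 1 * a.2, S 1 0 * a.1 + S 1 1 * a.2)

set_option linter.unusedSectionVars false
section Helpers
variable (N : ℕ) [NeZero N]

def ee (m : ZMod N) : ℂ := omegaN N ^ m.val

lemma omega_prim : IsPrimitiveRoot (omegaN N) N :=
  Complex.isPrimitiveRoot_exp N (NeZero.ne N)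

lemma omega_pow_self : omegaN N ^ N = 1 := (omega_prim N).pow_eq_one

lemma ee_natCast (n : ℕ) : ee N (n : ZMod N) = omegaN N ^ n := by
  unfold ee
  rw [ZMod.val_natCast]
  conv_rhs => rw [← Nat.div_add_mod n N, pow_add, pow_mul, omega_pow_self, one_pow, one_mul]

lemma cast_val (x : ZMod N) : ((x.val : ℕ) : ZMod N) = x := ZMod.natCast_rightInverse x

lemma ee_add (x y : ZMod N) : ee N (x + y) = ee N x * ee N y := by
  have h : x + y = ((x.val + y.val : ℕ) : ZMod N) := by push_cast [cast_val]; ring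
  rw [h, ee_natCast, pow_add]; rfl

lemma ee_zero : ee N 0 = 1 := by unfold ee; simp [ZMod.val_zero]

lemma ee_mul_neg (x : ZMod N) : ee N x * ee N (-x) = 1 := by
  rw [← ee_add]; simp [ee_zero]

lemma ee_conj (x : ZMod N) : (starRingEnd ℂ) (ee N x) = ee N (-x) := by
  have h1 : (starRingEnd ℂ) (omegaN N) = (omegaN N)⁻¹ := by
    unfold omegaN
    rw [← Complex.exp_conj, ← Complex.exp_neg]
    congr 1
    simp [map_div₀, _root_.map_mul, map_ofNat, Complex.conj_ofReal, Complex.conj_I, map_natCast]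
    ring
  have h2 : ee N (-x) = (ee N x)⁻¹ := eq_inv_of_mul_eq_one_left (by
    rw [← ee_add]; simp [ee_zero])
  rw [h2]
  unfold ee
  rw [map_pow, h1, inv_pow]

lemma sum_ee (t : ZMod N) : ∑ m : ZMod N, ee N (t * m) = if t = 0 then (N : ℂ) else 0 := by
  split_ifs with h
  · subst h; simp [ee_zero, ZMod.card]
  · have hval : 0 < t.val := Nat.pos_of_ne_zero (fun hc => h (by rwa [← ZMod.val_eq_zero]))
    have hlt : t.val < N := ZMod.val_lt t
    have hz : omegaN N ^ t.val ≠ 1 :=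
      (omega_prim N).pow_ne_one_of_pos_of_lt hval.ne' hlt
    have key : ∀ m : ZMod N, ee N (t * m) = (omegaN N ^ t.val) ^ m.val := by
      intro m
      have : t * m = ((t.val * m.val : ℕ) : ZMod N) := by push_cast [cast_val]; ring
      rw [this, ee_natCast, pow_mul]
    simp_rw [key]
    rw [show ∑ m : ZMod N, (omegaN N ^ t.val) ^ m.val
        = ∑ i ∈ Finset.range N, (omegaN N ^ t.val) ^ i from
      Finset.sum_nbij' (fun m => m.val) (fun i => (i : ZMod N))
        (fun m _ => Finset.mem_range.2 (ZMod.val_lt m))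
        (fun i hi => Finset.mem_univ _)
        (fun m _ => cast_val N m)
        (fun i hi => ZMod.val_cast_of_lt (Finset.mem_range.1 hi))
        (fun m _ => rfl)]
    rw [geom_sum_eq hz, ← pow_mul, mul_comm, pow_mul, omega_pow_self, one_pow]
    simp

lemma weylOp_apply (p q k m : ZMod N) :
    weylOp N p q k m
      = if k = m + q then ee N (-(2⁻¹ : ZMod N) * p * q) * ee N (p * k) else 0 := by
  unfold weylOp boostOp shiftOp ee
  simp [Matrix.smul_apply, Matrix.diagonal_mul, Matrix.of_apply, mul_ite, mul_one, mul_zero,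
    smul_eq_mul]

lemma phaseOp_apply (p q k l : ZMod N) :
    phaseOp N (p, q) k l = if k + l = 2 * q then ee N (p * (k - l)) else 0 := by
  have hWP : ∀ n : ZMod N, (weylOp N p q * parityOp N) k n = weylOp N p q k (-n) := by
    intro n
    simp [Matrix.mul_apply, parityOp, Matrix.of_apply, mul_ite, mul_one, mul_zero,
      Finset.sum_ite_eq']
  have : phaseOp N (p, q) k l
      = ∑ n : ZMod N, weylOp N p q k (-n) * (starRingEnd ℂ) (weylOp N p q l n) := by
    unfold phaseOp
    rw [Matrix.mul_apply]
    exact Finset.sum_congr rfl fun n _ => by rw [hWP, Matrix.conjTranspose_apply]; rfl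
  rw [this]
  simp only [weylOp_apply]
  have hcond : ∀ n : ZMod N, (k = -n + q) = (n = q - k) := by
    intro n; apply propext; constructor <;> intro h <;> (rw [h]; ring)
  simp only [apply_ite (starRingEnd ℂ), map_zero, ite_mul, zero_mul, mul_ite, mul_zero, hcond]
  simp only [← ite_and]
  have hswap : ∀ x : ZMod N, (l = x + q ∧ x = q - k) = (x = q - k ∧ l = x + q) :=
    fun x => propext and_comm
  simp only [hswap, ite_and]
  rw [Finset.sum_ite_eq' Finset.univ (q - k)]
  simp only [Finset.mem_univ, if_true]
  have hcond2 : (l = q - k + q) = (k + l = 2 * q) := by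
    apply propext; constructor <;> intro h
    · rw [h]; ring
    · linear_combination h
  simp only [hcond2]
  congr 1
  rw [_root_.map_mul, ee_conj, ee_conj, ← ee_add, ← ee_add, ← ee_add]
  congr 1
  ring

/-- matrices implementable by a unitary -/
def GoodMat (S : Matrix (Fin 2) (Fin 2) (ZMod N)) : Prop :=
  ∃ U : Matrix (ZMod N) (ZMod N) ℂ, U ∈ Matrix.unitaryGroup (ZMod N) ℂ ∧
    ∀ a : ZMod N × ZMod N, U * phaseOp N a * Uᴴ = phaseOp N (matAct N S a)

lemma matAct_mul (S T : Matrix (Fin 2) (Fin 2) (ZMod N)) (a : ZMod N × ZMod N) :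
    matAct N (S * T) a = matAct N S (matAct N T a) := by
  simp only [matAct, Matrix.mul_apply, Fin.sum_univ_two, Prod.mk.injEq]
  constructor <;> ring

lemma GoodMat.mul {S T : Matrix (Fin 2) (Fin 2) (ZMod N)}
    (hS : GoodMat N S) (hT : GoodMat N T) : GoodMat N (S * T) := by
  obtain ⟨U, hU, hcU⟩ := hS
  obtain ⟨V, hV, hcV⟩ := hT
  refine ⟨U * V, mul_mem hU hV, fun a => ?_⟩
  rw [matAct_mul, ← hcU (matAct N T a), ← hcV a, Matrix.conjTranspose_mul]
  simp only [Matrix.mul_assoc]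

lemma entry_00 (a b c d : ZMod N) : !![a, b; c, d] 0 0 = a := rfl
lemma entry_01 (a b c d : ZMod N) : !![a, b; c, d] 0 1 = b := rfl
lemma entry_10 (a b c d : ZMod N) : !![a, b; c, d] 1 0 = c := rfl
lemma entry_11 (a b c d : ZMod N) : !![a, b; c, d] 1 1 = d := rfl

lemma good_shear (h2 : (2 : ZMod N) * (2 : ZMod N)⁻¹ = 1) (t : ZMod N) :
    GoodMat N !![1, t; 0, 1] := by
  set d : ZMod N → ℂ := fun k => ee N ((2 : ZMod N)⁻¹ * t * (k * k)) with hd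
  have hd1 : ∀ k, d k * star (d k) = 1 := by
    intro k
    rw [RCLike.star_def, hd, ee_conj, ee_mul_neg]
  refine ⟨Matrix.diagonal d, ?_, ?_⟩
  · rw [Matrix.mem_unitaryGroup_iff, Matrix.star_eq_conjTranspose,
      Matrix.diagonal_conjTranspose, Matrix.diagonal_mul_diagonal]
    have : (fun k => d k * star d k) = fun _ => (1 : ℂ) := funext fun k => hd1 k
    rw [this, Matrix.diagonal_one]
  · rintro ⟨p, q⟩
    have hmat : matAct N !![1, t; 0, 1] (p, q) = (p + t * q, q) := by
      simp [matAct, entry_00, entry_01, entry_10, entry_11]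
    rw [hmat]
    ext k l
    rw [Matrix.diagonal_conjTranspose, Matrix.mul_diagonal, Matrix.diagonal_mul,
      phaseOp_apply, phaseOp_apply]
    simp only [mul_ite, ite_mul, mul_zero, zero_mul]
    split_ifs with h
    · rw [Pi.star_apply, RCLike.star_def, hd, ee_conj, ← ee_add, ← ee_add]
      congr 1
      linear_combination ((2 : ZMod N)⁻¹ * t * (k - l)) * h + (t * (k - l) * q) * h2
    · rfl

lemma good_fourier : GoodMat N !![0, 1; -1, 0] := by
  set c0 : ℂ := ((Real.sqrt N : ℝ) : ℂ)⁻¹ with hc0def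
  have hNpos : (0 : ℝ) < N := by
    have := Nat.pos_of_ne_zero (NeZero.ne N); exact_mod_cast this
  have hsq : ((Real.sqrt N : ℝ) : ℂ) * ((Real.sqrt N : ℝ) : ℂ) = (N : ℂ) := by
    rw [← Complex.ofReal_mul, Real.mul_self_sqrt hNpos.le]
    norm_num
  have hsqrt_ne : ((Real.sqrt N : ℝ) : ℂ) ≠ 0 := by
    rw [Complex.ofReal_ne_zero]
    positivity
  have hc0N : c0 * c0 * (N : ℂ) = 1 := by
    rw [hc0def, ← hsq]
    field_simp
  have hc0conj : (starRingEnd ℂ) c0 = c0 := by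
    rw [hc0def, map_inv₀, Complex.conj_ofReal]
  set U : Matrix (ZMod N) (ZMod N) ℂ := Matrix.of fun k l => c0 * ee N (k * l) with hU
  refine ⟨U, ?_, ?_⟩
  · rw [Matrix.mem_unitaryGroup_iff, Matrix.star_eq_conjTranspose]
    ext k l
    rw [Matrix.mul_apply, Matrix.one_apply]
    have hterm : ∀ m : ZMod N, U k m * Uᴴ m l = (c0 * c0) * ee N ((k - l) * m) := by
      intro m
      rw [Matrix.conjTranspose_apply, hU, Matrix.of_apply, Matrix.of_apply,
        RCLike.star_def, _root_.map_mul, hc0conj, ee_conj, mul_mul_mul_comm, ← ee_add]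
      rw [show k * m + -(l * m) = (k - l) * m by ring]
    simp only [hterm]
    rw [← Finset.mul_sum, sum_ee]
    simp only [show ((k - l = 0) = (k = l)) from propext sub_eq_zero]
    split_ifs with h
    · exact hc0N
    · rw [mul_zero]
  · rintro ⟨p, q⟩
    have hmat : matAct N !![0, 1; -1, 0] (p, q) = (q, -p) := by
      simp [matAct, entry_00, entry_01, entry_10, entry_11]
    rw [hmat]
    ext k l
    have hUA : ∀ n : ZMod N,
        (U * phaseOp N (p, q)) k n = c0 * ee N (k * (2 * q - n) + p * (2 * q - n - n)) := by
      intro n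
      rw [Matrix.mul_apply]
      have hAe : ∀ m : ZMod N, U k m * phaseOp N (p, q) m n
          = if m = 2 * q - n then c0 * ee N (k * m + p * (m - n)) else 0 := by
        intro m
        rw [phaseOp_apply, hU, Matrix.of_apply]
        simp only [mul_ite, mul_zero]
        simp only [show ((m + n = 2 * q) = (m = 2 * q - n)) from
          propext ⟨fun h => by linear_combination h, fun h => by rw [h]; ring⟩]
        split_ifs with h
        · rw [mul_assoc, ← ee_add]
        · rfl
      simp only [hAe]
      rw [Finset.sum_ite_eq' Finset.univ (2 * q - n)]
      simp only [Finset.mem_univ, if_true]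
    rw [Matrix.mul_apply]
    have hterm : ∀ n : ZMod N, (U * phaseOp N (p, q)) k n * Uᴴ n l
        = (c0 * c0 * ee N (2 * k * q + 2 * p * q)) * ee N ((-(k + 2 * p + l)) * n) := by
      intro n
      rw [hUA n, Matrix.conjTranspose_apply, hU, Matrix.of_apply, RCLike.star_def,
        _root_.map_mul, hc0conj, ee_conj, mul_mul_mul_comm, ← ee_add]
      rw [show k * (2 * q - n) + p * (2 * q - n - n) + -(l * n)
          = (2 * k * q + 2 * p * q) + (-(k + 2 * p + l)) * n by ring, ee_add]
      ring
    simp only [hterm]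
    rw [← Finset.mul_sum, sum_ee, phaseOp_apply]
    simp only [show ((-(k + 2 * p + l) = 0) = (k + l = 2 * -p)) from
      propext ⟨fun h => by linear_combination -h, fun h => by linear_combination -h⟩]
    split_ifs with h
    · rw [show ee N (q * (k - l)) = ee N (2 * k * q + 2 * p * q) from by
        congr 1; linear_combination (-q) * h]
      linear_combination ee N (2 * k * q + 2 * p * q) * hc0N
    · rw [mul_zero]

lemma exists_unit_comb (a c x y : ZMod N) (h : x * a + y * c = 1) :
    ∃ t : ZMod N, IsUnit (a + t * c) := by
  classical
  set A := a.val with hA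
  set C := c.val with hC
  set T : ℕ := ∏ p ∈ N.primeFactors.filter (fun p => ¬ p ∣ A), p with hT
  refine ⟨(T : ZMod N), ?_⟩
  have hmodp : ∀ p : ℕ, p.Prime → p ∣ N → p ∣ A → p ∣ C → False := by
    intro p hp hpN hpA hpC
    haveI : Fact p.Prime := ⟨hp⟩
    have h' := congrArg (ZMod.castHom hpN (ZMod p)) h
    rw [map_add, _root_.map_mul, _root_.map_mul, _root_.map_one] at h'
    have ha0 : (ZMod.castHom hpN (ZMod p)) a = 0 := by
      rw [← cast_val N a, map_natCast, ← hA]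
      exact (ZMod.natCast_eq_zero_iff A p).2 hpA
    have hc0 : (ZMod.castHom hpN (ZMod p)) c = 0 := by
      rw [← cast_val N c, map_natCast, ← hC]
      exact (ZMod.natCast_eq_zero_iff C p).2 hpC
    rw [ha0, hc0, mul_zero, mul_zero, add_zero] at h'
    exact zero_ne_one h'
  have key : Nat.Coprime (A + T * C) N := by
    by_contra hcop
    obtain ⟨p, hp, hp1, hp2⟩ := Nat.Prime.not_coprime_iff_dvd.1 hcop
    by_cases hpA : p ∣ A
    · have hpT : ¬ p ∣ T := by
        intro hdvd
        obtain ⟨q, hq, hpq⟩ := (Nat.Prime.prime hp).exists_mem_finset_dvd hdvd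
        rw [Finset.mem_filter] at hq
        have hqprime : q.Prime := (Nat.mem_primeFactors.1 hq.1).1
        have : p = q := (Nat.prime_dvd_prime_iff_eq hp hqprime).1 hpq
        exact hq.2 (this ▸ hpA)
      have hpC : ¬ p ∣ C := fun hpC => hmodp p hp hp2 hpA hpC
      have hTC : p ∣ T * C := (Nat.dvd_add_right hpA).1 hp1
      rcases (Nat.Prime.dvd_mul hp).1 hTC with h' | h'
      · exact hpT h'
      · exact hpC h'
    · have hmem : p ∈ N.primeFactors.filter (fun p => ¬ p ∣ A) := by
        rw [Finset.mem_filter, Nat.mem_primeFactors]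
        exact ⟨⟨hp, hp2, NeZero.ne N⟩, hpA⟩
      have hpT : p ∣ T := Finset.dvd_prod_of_mem _ hmem
      have hTC : p ∣ T * C := hpT.mul_right C
      have : p ∣ A := by
        rw [add_comm] at hp1
        exact (Nat.dvd_add_right hTC).1 hp1
      exact hpA this
  have hunit := (ZMod.isUnit_iff_coprime (A + T * C) N).2 key
  rwa [show ((A + T * C : ℕ) : ZMod N) = a + (T : ZMod N) * c from by
    push_cast [hA, hC, cast_val]; ring] at hunit

section Decomp

variable (a b c d t u v : ZMod N)

lemma step1 : !![a, b; c, d]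
    = !![1, -t; 0, 1] * !![a + t * c, b + t * d; c, d] := by
  ext i j
  fin_cases i <;> fin_cases j <;>
    simp [Matrix.mul_apply, Fin.sum_univ_two, mul_comm]

lemma step2 (hv : u * v = 1) : !![u, b; c, d]
    = !![1, 0; c * v, 1] * !![u, b; 0, d - c * v * b] := by
  ext i j
  fin_cases i <;> fin_cases j <;>
    simp [Matrix.mul_apply, Fin.sum_univ_two]
  linear_combination (-c) * hv

lemma step3 (hv : u * v = 1) : !![u, b; 0, v]
    = !![1, b * u; 0, 1] * !![u, 0; 0, v] := by
  ext i j
  fin_cases i <;> fin_cases j <;>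
    simp [Matrix.mul_apply, Fin.sum_univ_two]
  linear_combination (-b) * hv

lemma step4a : !![1, -u; 0, 1] * !![0, 1; -1, 0] = !![u, 1; -1, 0] := by
  ext i j
  fin_cases i <;> fin_cases j <;>
    simp [Matrix.mul_apply, Fin.sum_univ_two]

lemma step4b (hv : u * v = 1) : !![1, 0; v, 1] * !![u, 1; -1, 0] = !![u, 1; 0, v] := by
  ext i j
  fin_cases i <;> fin_cases j <;>
    simp [Matrix.mul_apply, Fin.sum_univ_two]
  linear_combination hv

lemma step4c (hv : u * v = 1) : !![1, -u; 0, 1] * !![u, 1; 0, v] = !![u, 0; 0, v] := by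
  ext i j
  fin_cases i <;> fin_cases j <;>
    simp [Matrix.mul_apply, Fin.sum_univ_two]
  linear_combination -hv

lemma step4 (hv : u * v = 1) : !![u, 0; 0, v]
    = !![1, -u; 0, 1] * (!![1, 0; v, 1] * (!![1, -u; 0, 1] * !![0, 1; -1, 0])) := by
  rw [step4a, step4b N u v hv, step4c N u v hv]

lemma lmat_eq : !![1, 0; t, 1]
    = !![0, 1; -1, 0] * (!![1, -t; 0, 1] * (!![0, 1; -1, 0]
        * (!![0, 1; -1, 0] * !![0, 1; -1, 0]))) := by
  ext i j
  fin_cases i <;> fin_cases j <;>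
    simp [Matrix.mul_apply, Fin.sum_univ_two]

end Decomp

lemma good_lshear (h2 : (2 : ZMod N) * (2 : ZMod N)⁻¹ = 1) (t : ZMod N) :
    GoodMat N !![1, 0; t, 1] := by
  rw [lmat_eq]
  exact (good_fourier N).mul _ ((good_shear N h2 (-t)).mul _ ((good_fourier N).mul _
    ((good_fourier N).mul _ (good_fourier N))))
end Helpers

/-- for odd `N` and any 2×2 matrix `S` over `ZMod N` with `det S = 1`,
there is a unitary `μ(S)` on `ℂ^N` with `μ(S)·A(a)·μ(S)† = A(S·a)` for all `a`. -/
theorem exists_metaplectic (N : ℕ) [NeZero N] (hN : Odd N)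
    (S : Matrix (Fin 2) (Fin 2) (ZMod N)) (hS : S.det = 1) :
    ∃ U : Matrix (ZMod N) (ZMod N) ℂ, U ∈ Matrix.unitaryGroup (ZMod N) ℂ ∧
      ∀ a : ZMod N × ZMod N, U * phaseOp N a * Uᴴ = phaseOp N (matAct N S a) := by
  classical
  have h2 : (2 : ZMod N) * (2 : ZMod N)⁻¹ = 1 := by
    apply ZMod.mul_inv_of_unit
    have hcast : ((2 : ℕ) : ZMod N) = (2 : ZMod N) := by norm_cast
    rw [← hcast]
    exact (ZMod.isUnit_iff_coprime 2 N).2 (Nat.coprime_two_left.2 hN)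
  have hdet : S 0 0 * S 1 1 - S 0 1 * S 1 0 = 1 := by
    rw [Matrix.det_fin_two] at hS; exact hS
  obtain ⟨t, hu⟩ := exists_unit_comb N (S 0 0) (S 1 0) (S 1 1) (-(S 0 1))
    (by linear_combination hdet)
  set a := S 0 0 with ha
  set b := S 0 1 with hb
  set c := S 1 0 with hc
  set d := S 1 1 with hd
  set v : ZMod N := (a + t * c)⁻¹ with hvdef
  have hv : (a + t * c) * v = 1 := ZMod.mul_inv_of_unit _ hu
  have h1 : (a + t * c) * d - c * (b + t * d) = 1 := by linear_combination hdet
  have hd' : d - c * v * (b + t * d) = v := by linear_combination v * h1 + (-d) * hv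
  have hSmat : S = !![a, b; c, d] := by
    ext i j; fin_cases i <;> fin_cases j <;> rfl
  have hdecomp : S = !![1, -t; 0, 1] * (!![1, 0; c * v, 1]
      * (!![1, (b + t * d) * (a + t * c); 0, 1]
      * (!![1, -(a + t * c); 0, 1] * (!![1, 0; v, 1]
      * (!![1, -(a + t * c); 0, 1] * !![0, 1; -1, 0]))))) := by
    conv_lhs => rw [hSmat, step1 N a b c d t, step2 N (b + t * d) c d (a + t * c) v hv, hd',
      step3 N (b + t * d) (a + t * c) v hv, step4 N (a + t * c) v hv]
  have : GoodMat N S := by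
    rw [hdecomp]
    exact (good_shear N h2 (-t)).mul _ ((good_lshear N h2 (c * v)).mul _
      ((good_shear N h2 ((b + t * d) * (a + t * c))).mul _
      ((good_shear N h2 (-(a + t * c))).mul _ ((good_lshear N h2 v).mul _
      ((good_shear N h2 (-(a + t * c))).mul _ (good_fourier N))))))
  exact this
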